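/- Let V be an m-ordered PSO and suppose x ∈ S satisfies V(x) = e_k for some k ∈ ℕ. Then P_{i_1...i_m,k} = 1 for all i_1,...,i_m in supp(x), and consequently V(y) = e_k for every y ∈ S with supp(y) ⊂ supp(x). -/
import Mathlib
set_option maxHeartbeats 1000000


/-- The m-ordered polynomial operator associated to a hypermatrix `P`. -/
noncomputable def psoV (m : ℕ) (P : (Fin m → ℕ) → ℕ → ℝ) (x : ℕ → ℝ) (k : ℕ) : ℝ :=
  ∑' i : Fin m → ℕ, P i k * ∏ j, x (i j)

/-- The hypermatrix is stochastic. -/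
def IsStochastic (m : ℕ) (P : (Fin m → ℕ) → ℕ → ℝ) : Prop :=
  (∀ i k, 0 ≤ P i k) ∧ ∀ i, HasSum (fun k => P i k) 1

/-- symmetry of the hypermatrix in its first m indices. -/
def HypSymm (m : ℕ) (P : (Fin m → ℕ) → ℕ → ℝ) : Prop :=
  ∀ (σ : Equiv.Perm (Fin m)) (i : Fin m → ℕ) (k : ℕ), P (i ∘ σ) k = P i k

/-- membership in the infinite-dimensional simplex S. -/
def inS (x : ℕ → ℝ) : Prop := (∀ i, 0 ≤ x i) ∧ HasSum x 1

/-- the standard basis vector e_i. -/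
def stdBasis (i : ℕ) : ℕ → ℝ := fun n => if n = i then 1 else 0

/-- x and y are orthogonal: disjoint supports. -/
def Orth (x y : ℕ → ℝ) : Prop := ∀ k, x k * y k = 0

/-- V is orthogonal preserving on S. -/
def IsOP (m : ℕ) (P : (Fin m → ℕ) → ℕ → ℝ) : Prop :=
  ∀ x y : ℕ → ℝ, inS x → inS y → Orth x y → Orth (psoV m P x) (psoV m P y)

/-- V is surjective on S. -/
def SurjOnS (m : ℕ) (P : (Fin m → ℕ) → ℕ → ℝ) : Prop :=
  ∀ y : ℕ → ℝ, inS y → ∃ x : ℕ → ℝ, inS x ∧ psoV m P x = y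

lemma hasSum_pi_prod (m : ℕ) (x : ℕ → ℝ) (hx0 : ∀ i, 0 ≤ x i) (hs : HasSum x 1) :
    HasSum (fun i : Fin m → ℕ => ∏ j, x (i j)) 1 := by
  induction m with
  | zero =>
    have : (fun i : Fin 0 → ℕ => ∏ j, x (i j)) = fun _ => (1 : ℝ) := by
      funext i; simp
    rw [this]
    exact hasSum_single (f := fun _ : Fin 0 → ℕ => (1 : ℝ)) default
      (fun b hb => absurd (Subsingleton.elim b default) hb)
  | succ n ih =>
    have hmul : HasSum (fun z : ℕ × (Fin n → ℕ) => x z.1 * ∏ j, x (z.2 j)) 1 := by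
      have hsm : Summable (fun z : ℕ × (Fin n → ℕ) => x z.1 * ∏ j, x (z.2 j)) :=
        Summable.mul_of_nonneg (f := x) (g := fun i : Fin n → ℕ => ∏ j, x (i j))
          hs.summable ih.summable hx0 (fun i => Finset.prod_nonneg fun j _ => hx0 _)
      have h := HasSum.mul hs ih hsm
      rwa [one_mul] at h
    rw [← (Fin.consEquiv (fun _ : Fin (n+1) => ℕ)).hasSum_iff]
    have hcomp : ((fun i : Fin (n+1) → ℕ => ∏ j, x (i j)) ∘ (Fin.consEquiv (fun _ : Fin (n+1) => ℕ)))
        = fun z : ℕ × (Fin n → ℕ) => x z.1 * ∏ j, x (z.2 j) := by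
      funext z
      simp [Fin.consEquiv, Fin.prod_univ_succ]
    rw [hcomp]
    exact hmul

theorem stmt7 (m : ℕ) (hm : 1 ≤ m) (P : (Fin m → ℕ) → ℕ → ℝ)
    (hP : IsStochastic m P) (x : ℕ → ℝ) (hx : inS x) (k : ℕ)
    (hV : psoV m P x = stdBasis k) :
    (∀ i : Fin m → ℕ, (∀ j, 0 < x (i j)) → P i k = 1) ∧
    (∀ y : ℕ → ℝ, inS y → (∀ n, x n = 0 → y n = 0) → psoV m P y = stdBasis k) := by
  obtain ⟨hP0, hPs⟩ := hP
  obtain ⟨hx0, hxs⟩ := hx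
  have hprod : HasSum (fun i : Fin m → ℕ => ∏ j, x (i j)) 1 := hasSum_pi_prod m x hx0 hxs
  have hpk1 : ∀ i : Fin m → ℕ, P i k ≤ 1 := fun i =>
    le_hasSum (hPs i) k (fun n _ => hP0 i n)
  have hsumm : Summable (fun i : Fin m → ℕ => P i k * ∏ j, x (i j)) := by
    apply Summable.of_nonneg_of_le
      (fun i => mul_nonneg (hP0 i k) (Finset.prod_nonneg fun j _ => hx0 _))
      (fun i => ?_) hprod.summable
    calc P i k * ∏ j, x (i j) ≤ 1 * ∏ j, x (i j) :=
          mul_le_mul_of_nonneg_right (hpk1 i) (Finset.prod_nonneg fun j _ => hx0 _)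
      _ = ∏ j, x (i j) := one_mul _
  have htsum : psoV m P x k = 1 := by
    rw [hV]; simp [stdBasis]
  have hfk : HasSum (fun i : Fin m → ℕ => P i k * ∏ j, x (i j)) 1 := by
    have := hsumm.hasSum
    rwa [show ∑' i : Fin m → ℕ, P i k * ∏ j, x (i j) = 1 from htsum] at this
  have hdiff : HasSum (fun i : Fin m → ℕ => (∏ j, x (i j)) - P i k * ∏ j, x (i j)) 0 := by
    simpa using hprod.sub hfk
  have heq : ∀ i : Fin m → ℕ, P i k * ∏ j, x (i j) = ∏ j, x (i j) := by
    intro i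
    have hle : (∏ j, x (i j)) - P i k * ∏ j, x (i j) ≤ 0 :=
      le_hasSum hdiff i (fun n _ => by
        have : P n k * ∏ j, x (n j) ≤ 1 * ∏ j, x (n j) :=
          mul_le_mul_of_nonneg_right (hpk1 n) (Finset.prod_nonneg fun j _ => hx0 _)
        linarith)
    have hge : 0 ≤ (∏ j, x (i j)) - P i k * ∏ j, x (i j) := by
      have : P i k * ∏ j, x (i j) ≤ 1 * ∏ j, x (i j) :=
        mul_le_mul_of_nonneg_right (hpk1 i) (Finset.prod_nonneg fun j _ => hx0 _)
      linarith
    linarith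
  have h1 : ∀ i : Fin m → ℕ, (∀ j, 0 < x (i j)) → P i k = 1 := by
    intro i hpos
    have hp : 0 < ∏ j, x (i j) := Finset.prod_pos fun j _ => hpos j
    have h2 : P i k * ∏ j, x (i j) = 1 * ∏ j, x (i j) := by rw [one_mul]; exact heq i
    exact mul_right_cancel₀ (ne_of_gt hp) h2
  refine ⟨h1, ?_⟩
  intro y hy hsupp
  obtain ⟨hy0, hys⟩ := hy
  have hyprod : HasSum (fun i : Fin m → ℕ => ∏ j, y (i j)) 1 := hasSum_pi_prod m y hy0 hys
  -- key: for any i with nonzero y-product, P i k = 1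
  have key : ∀ i : Fin m → ℕ, (∏ j, y (i j)) ≠ 0 → P i k = 1 := by
    intro i hne
    apply h1
    intro j
    have hyj : y (i j) ≠ 0 := fun h0 =>
      hne (Finset.prod_eq_zero (Finset.mem_univ j) h0)
    have hxj : x (i j) ≠ 0 := fun h0 => hyj (hsupp _ h0)
    exact lt_of_le_of_ne (hx0 _) (Ne.symm hxj)
  funext n
  by_cases hn : n = k
  · subst hn
    have : ∀ i : Fin m → ℕ, P i n * ∏ j, y (i j) = ∏ j, y (i j) := by
      intro i
      by_cases hne : (∏ j, y (i j)) = 0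
      · simp [hne]
      · rw [key i hne, one_mul]
    simp only [psoV, this, stdBasis, if_pos rfl]
    exact hyprod.tsum_eq
  · have hz : ∀ i : Fin m → ℕ, P i n * ∏ j, y (i j) = 0 := by
      intro i
      by_cases hne : (∏ j, y (i j)) = 0
      · simp [hne]
      · have hk1 : P i k = 1 := key i hne
        have hsum2 : P i n + P i k ≤ 1 := by
          have := sum_le_hasSum ({n, k} : Finset ℕ) (fun b _ => hP0 i b) (hPs i)
          rwa [Finset.sum_pair hn] at this
        have : P i n = 0 := le_antisymm (by linarith) (hP0 i n)
        simp [this]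
    simp only [psoV, hz, tsum_zero, stdBasis, if_neg hn]
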